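/- Let S be finite and 𝒢 ⊆ F_S. Every stochastic matrix on S is realizable by a probability measure supported on 𝒢 if and only if 𝒢 = F_S. In particular, for any f ∈ F_S there is a stochastic matrix P with p_{i,f(i)} > 1 − 1/|S| for all i, and every probability measure μ on F_S consistent with such a P must have f in its support. -/

import Mathlib

open Finset

private lemma key_support {S : Type*} [Fintype S] [DecidableEq S] [Nonempty S] (f : S → S)
    (P : Matrix S S ℝ)
    (hPf : ∀ i, 1 - 1 / (Fintype.card S : ℝ) < P i (f i))
    (μ : (S → S) → ℝ) (hμ0 : ∀ g, 0 ≤ μ g) (hμ1 : ∑ g, μ g = 1)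
    (hcons : ∀ i j, (∑ g : S → S, if g i = j then μ g else 0) = P i j) : μ f ≠ 0 := by
  have hn : (0:ℝ) < (Fintype.card S : ℝ) := by
    exact_mod_cast Fintype.card_pos
  have hrow : ∀ i, (∑ g : S → S, if g i = f i then 0 else μ g) = 1 - P i (f i) := by
    intro i
    have : (∑ g : S → S, if g i = f i then 0 else μ g)
        = (∑ g : S → S, μ g) - ∑ g : S → S, if g i = f i then μ g else 0 := by
      rw [← Finset.sum_sub_distrib]
      refine Finset.sum_congr rfl fun g _ => ?_
      by_cases h : g i = f i <;> simp [h]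
    rw [this, hμ1, hcons i (f i)]
  have hbound : ∑ g ∈ Finset.univ.erase f, μ g < 1 := by
    have h1 : ∑ g ∈ Finset.univ.erase f, μ g
        ≤ ∑ g ∈ Finset.univ.erase f, ∑ i : S, if g i = f i then 0 else μ g := by
      refine Finset.sum_le_sum fun g hg => ?_
      have hgf : g ≠ f := (Finset.mem_erase.mp hg).1
      obtain ⟨i, hi⟩ := Function.ne_iff.mp hgf
      have := Finset.single_le_sum (f := fun i => if g i = f i then 0 else μ g)
        (fun k _ => by split; exacts [le_rfl, hμ0 g]) (Finset.mem_univ i)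
      simpa [hi] using this
    have h2 : ∑ g ∈ Finset.univ.erase f, (∑ i : S, if g i = f i then 0 else μ g)
        ≤ ∑ g : S → S, (∑ i : S, if g i = f i then 0 else μ g) := by
      refine Finset.sum_le_sum_of_subset_of_nonneg (Finset.erase_subset _ _) ?_
      intro g _ _
      exact Finset.sum_nonneg fun i _ => by split; exacts [le_rfl, hμ0 g]
    have h3 : ∑ g : S → S, ∑ i : S, (if g i = f i then 0 else μ g)
        = ∑ i : S, (1 - P i (f i)) := by
      rw [Finset.sum_comm]
      exact Finset.sum_congr rfl fun i _ => hrow i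
    have h4 : ∑ i : S, (1 - P i (f i)) < ∑ i : S, 1 / (Fintype.card S : ℝ) := by
      refine Finset.sum_lt_sum_of_nonempty Finset.univ_nonempty fun i _ => ?_
      linarith [hPf i]
    have h5 : ∑ i : S, 1 / (Fintype.card S : ℝ) = 1 := by
      rw [Finset.sum_const, Finset.card_univ, nsmul_eq_mul]
      field_simp
    linarith
  have hsum : μ f + ∑ g ∈ Finset.univ.erase f, μ g = 1 := by
    rw [Finset.add_sum_erase _ _ (Finset.mem_univ f)]
    exact hμ1
  have : 0 < μ f := by linarith
  exact ne_of_gt this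

private lemma prod_measure_realizes {S : Type*} [Fintype S] [DecidableEq S]
    (P : Matrix S S ℝ) (hP0 : ∀ i j, 0 ≤ P i j) (hP1 : ∀ i, ∑ j, P i j = 1) :
    (∀ f : S → S, 0 ≤ ∏ k, P k (f k)) ∧ (∑ f : S → S, ∏ k, P k (f k) = 1) ∧
    ∀ i j, (∑ f : S → S, if f i = j then ∏ k, P k (f k) else 0) = P i j := by
  refine ⟨fun f => Finset.prod_nonneg fun k _ => hP0 k (f k), ?_, ?_⟩
  · have := Finset.prod_univ_sum (fun _ : S => (Finset.univ : Finset S))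
      (fun k j => P k j)
    rw [Fintype.piFinset_univ] at this
    rw [← this]
    simp [hP1]
  · intro i j
    set Q : Matrix S S ℝ := fun k l => if k = i then (if l = j then P i j else 0) else P k l
      with hQ
    have hterm : ∀ f : S → S,
        (if f i = j then ∏ k, P k (f k) else 0) = ∏ k, Q k (f k) := by
      intro f
      by_cases h : f i = j
      · simp only [h, if_true]
        refine Finset.prod_congr rfl fun k _ => ?_
        by_cases hk : k = i
        · subst hk; simp [hQ, h]
        · simp [hQ, hk]
      · rw [if_neg h]
        refine (Finset.prod_eq_zero (Finset.mem_univ i) ?_).symm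
        simp [hQ, h]
    rw [Finset.sum_congr rfl fun f _ => hterm f]
    have := Finset.prod_univ_sum (fun _ : S => (Finset.univ : Finset S))
      (fun k l => Q k l)
    rw [Fintype.piFinset_univ] at this
    rw [← this]
    have hcol : ∀ k : S, (∑ l, Q k l) = if k = i then P i j else 1 := by
      intro k
      by_cases hk : k = i
      · subst hk; simp [hQ]
      · simp [hQ, hk, hP1 k]
    rw [Finset.prod_congr rfl fun k _ => hcol k]
    simp

/-- for `𝒢 ⊆ F_S`, every stochastic matrix on `S` is realizable by a
probability measure supported on `𝒢` if and only if `𝒢 = F_S`. In particular, for every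
`f ∈ F_S` there is a stochastic matrix `P` with `p_{i, f i} > 1 - 1/|S|` for all `i`, and
every probability measure consistent with such a `P` has `f` in its support. -/
theorem realizable_eq_all_iff_univ {S : Type*} [Fintype S] [DecidableEq S] [Nonempty S]
    (𝒢 : Set (S → S)) :
    (({P : Matrix S S ℝ | ∃ μ : (S → S) → ℝ, (∀ f, 0 ≤ μ f) ∧ (∑ f, μ f = 1) ∧
          (∀ f, μ f ≠ 0 → f ∈ 𝒢) ∧
          ∀ i j, (∑ f : S → S, if f i = j then μ f else 0) = P i j} =
        {P : Matrix S S ℝ | (∀ i j, 0 ≤ P i j) ∧ ∀ i, ∑ j, P i j = 1}) ↔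
      𝒢 = Set.univ) ∧
    ∀ f : S → S,
      (∃ P : Matrix S S ℝ, (∀ i j, 0 ≤ P i j) ∧ (∀ i, ∑ j, P i j = 1) ∧
        ∀ i, 1 - 1 / (Fintype.card S : ℝ) < P i (f i)) ∧
      ∀ P : Matrix S S ℝ, (∀ i j, 0 ≤ P i j) → (∀ i, ∑ j, P i j = 1) →
        (∀ i, 1 - 1 / (Fintype.card S : ℝ) < P i (f i)) →
        ∀ μ : (S → S) → ℝ, (∀ g, 0 ≤ μ g) → (∑ g, μ g = 1) →
          (∀ i j, (∑ g : S → S, if g i = j then μ g else 0) = P i j) → μ f ≠ 0 := by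
  have hn : (0:ℝ) < (Fintype.card S : ℝ) := by exact_mod_cast Fintype.card_pos
  -- deterministic matrix for f
  have hdet : ∀ f : S → S, (∀ i j, 0 ≤ (fun i j => if j = f i then (1:ℝ) else 0) i j) ∧
      (∀ i, ∑ j, (fun i j => if j = f i then (1:ℝ) else 0) i j = 1) ∧
      (∀ i, 1 - 1 / (Fintype.card S : ℝ) < (fun i j => if j = f i then (1:ℝ) else 0) i (f i)) := by
    intro f
    refine ⟨fun i j => by positivity, fun i => by simp, fun i => ?_⟩
    have h01 : 0 < 1 / (Fintype.card S : ℝ) := by positivity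
    simpa using sub_lt_self (1:ℝ) h01
  constructor
  · constructor
    · -- equality of sets → 𝒢 = univ
      intro h
      ext f
      simp only [Set.mem_univ, iff_true]
      obtain ⟨h0, h1, h2⟩ := hdet f
      have hmem : (fun i j => if j = f i then (1:ℝ) else 0) ∈
          {P : Matrix S S ℝ | (∀ i j, 0 ≤ P i j) ∧ ∀ i, ∑ j, P i j = 1} := ⟨h0, h1⟩
      rw [← h] at hmem
      obtain ⟨μ, hμ0, hμ1, hsupp, hcons⟩ := hmem
      exact hsupp f (key_support f _ h2 μ hμ0 hμ1 hcons)
    · -- 𝒢 = univ → equality of sets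
      rintro rfl
      ext P
      simp only [Set.mem_setOf_eq]
      constructor
      · rintro ⟨μ, hμ0, hμ1, -, hcons⟩
        refine ⟨fun i j => ?_, fun i => ?_⟩
        · rw [← hcons i j]
          exact Finset.sum_nonneg fun g _ => by split; exacts [hμ0 g, le_rfl]
        · have : ∀ j, P i j = ∑ g : S → S, if g i = j then μ g else 0 :=
            fun j => (hcons i j).symm
          rw [Finset.sum_congr rfl fun j _ => this j, Finset.sum_comm]
          rw [← hμ1]
          exact Finset.sum_congr rfl fun g _ => by simp
      · rintro ⟨hP0, hP1⟩
        obtain ⟨q0, q1, q2⟩ := prod_measure_realizes P hP0 hP1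
        exact ⟨fun f => ∏ k, P k (f k), q0, q1, fun _ _ => Set.mem_univ _, q2⟩
  · intro f
    refine ⟨⟨fun i j => if j = f i then 1 else 0, (hdet f).1, (hdet f).2.1, (hdet f).2.2⟩, ?_⟩
    intro P _ _ hPf μ hμ0 hμ1 hcons
    exact key_support f P hPf μ hμ0 hμ1 hcons
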